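/- Let V be a finite set with |V| = n ≥ 2, and for each u ∈ V let p_u ∈ [0,1] and τ_u ∈ ℝ. Fix γ > 0 and δ > 0, and let R be a positive integer with R ≥ n² ln(2 n^{δ+1}) / (2γ²). For each u ∈ V, let X_u^{(1)}, …, X_u^{(R)} be independent identically distributed {0,1}-valued random variables with P(X_u^{(i)} = 1) = p_u (the families for different u need not be independent of each other), and set P̂_u = (1/R) Σ_{i=1}^R X_u^{(i)}. Define f = Σ_{u∈V} min(p_u, τ_u) and f̂ = Σ_{u∈V} min(P̂_u, τ_u). Then P(|f̂ − f| ≤ γ) ≥ 1 − n^{−δ}. -/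

import Mathlib

open Real MeasureTheory ProbabilityTheory

section Aux
variable {Ω : Type*} [MeasurableSpace Ω] {μ : Measure Ω} [IsProbabilityMeasure μ]


lemma bern_D_pos {q : ℝ} (hq0 : 0 ≤ q) (hq1 : q ≤ 1) (s : ℝ) :
    0 < 1 - q + q * exp s := by
  rcases eq_or_lt_of_le hq0 with h | h
  · simp [← h]
  · nlinarith [mul_pos h (exp_pos s)]

lemma bern_hasDerivAt_Q {q : ℝ} (hq0 : 0 ≤ q) (hq1 : q ≤ 1) (s : ℝ) :
    HasDerivAt (fun s => q * exp s / (1 - q + q * exp s))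
      (q * exp s * (1 - q) / (1 - q + q * exp s) ^ 2) s := by
  have hu : HasDerivAt (fun s => q * exp s) (q * exp s) s :=
    (Real.hasDerivAt_exp s).const_mul q
  have hv : HasDerivAt (fun s => 1 - q + q * exp s) (q * exp s) s := hu.const_add (1 - q)
  have hD := bern_D_pos hq0 hq1 s
  have := hu.div hv hD.ne'
  refine this.congr_deriv ?_
  ring

lemma bern_Q_close {q : ℝ} (hq0 : 0 ≤ q) (hq1 : q ≤ 1) (s : ℝ) :
    |q * exp s / (1 - q + q * exp s) - q| ≤ |s| / 4 := by
  have key := Convex.norm_image_sub_le_of_norm_hasDerivWithin_le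
    (f := fun s => q * exp s / (1 - q + q * exp s))
    (f' := fun s => q * exp s * (1 - q) / (1 - q + q * exp s) ^ 2)
    (C := 1/4) (s := Set.univ)
    (fun x _ => (bern_hasDerivAt_Q hq0 hq1 x).hasDerivWithinAt)
    (fun x _ => by
      have hD := bern_D_pos hq0 hq1 x
      rw [Real.norm_eq_abs, abs_of_nonneg (div_nonneg (mul_nonneg (mul_nonneg hq0 (exp_pos x).le) (sub_nonneg.2 hq1)) (sq_nonneg _))]
      rw [div_le_iff₀ (pow_pos hD 2)]
      nlinarith [sq_nonneg (1 - q - q * exp x), mul_nonneg (mul_nonneg hq0 (exp_pos x).le) (sub_nonneg.2 hq1)])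
    convex_univ (Set.mem_univ 0) (Set.mem_univ s)
  simp only [exp_zero, mul_one] at key
  rw [Real.norm_eq_abs, Real.norm_eq_abs] at key
  have h0 : q / (1 - q + q) = q := by norm_num
  rw [h0, sub_zero] at key
  linarith [key, abs_nonneg s]

/-- Hoeffding's lemma for Bernoulli-type mgf. -/
lemma bern_mgf_le {q : ℝ} (hq0 : 0 ≤ q) (hq1 : q ≤ 1) (t : ℝ) :
    1 - q + q * exp t ≤ exp (q * t + t ^ 2 / 8) := by
  set g : ℝ → ℝ := fun s => q * s + s ^ 2 / 8 - log (1 - q + q * exp s) with hg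
  have hg' : ∀ s, HasDerivAt g (q + s / 4 - q * exp s / (1 - q + q * exp s)) s := by
    intro s
    have hu : HasDerivAt (fun s => q * exp s) (q * exp s) s :=
      (Real.hasDerivAt_exp s).const_mul q
    have hv : HasDerivAt (fun s => 1 - q + q * exp s) (q * exp s) s := hu.const_add (1 - q)
    have hlog : HasDerivAt (fun s => log (1 - q + q * exp s))
        (q * exp s / (1 - q + q * exp s)) s := hv.log (bern_D_pos hq0 hq1 s).ne'
    have h1 : HasDerivAt (fun s : ℝ => q * s + s ^ 2 / 8) (q + s / 4) s := by
      have := ((hasDerivAt_id s).const_mul q).add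
        (((hasDerivAt_pow 2 s).div_const 8))
      refine this.congr_deriv ?_
      norm_num
      ring
    exact (h1.sub hlog)
  have hg0 : g 0 = 0 := by simp [hg]
  have hgt : 0 ≤ g t := by
    rcases le_or_gt 0 t with ht | ht
    · have hmono : MonotoneOn g (Set.Icc 0 t) := by
        apply monotoneOn_of_deriv_nonneg (convex_Icc 0 t)
        · exact fun x _ => ((hg' x).continuousAt.continuousWithinAt)
        · exact fun x _ => ((hg' x).differentiableAt.differentiableWithinAt)
        · intro x hx
          rw [(hg' x).deriv]
          have hq := bern_Q_close hq0 hq1 x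
          rw [interior_Icc] at hx
          rw [abs_of_pos hx.1] at hq
          have := abs_le.1 hq
          linarith [this.2]
      have := hmono (Set.left_mem_Icc.2 ht) (Set.right_mem_Icc.2 ht) ht
      rwa [hg0] at this
    · have hmono : AntitoneOn g (Set.Icc t 0) := by
        apply antitoneOn_of_deriv_nonpos (convex_Icc t 0)
        · exact fun x _ => ((hg' x).continuousAt.continuousWithinAt)
        · exact fun x _ => ((hg' x).differentiableAt.differentiableWithinAt)
        · intro x hx
          rw [(hg' x).deriv]
          have hq := bern_Q_close hq0 hq1 x
          rw [interior_Icc] at hx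
          rw [abs_of_neg hx.2] at hq
          have := abs_le.1 hq
          linarith [this.1]
      have := hmono (Set.left_mem_Icc.2 ht.le) (Set.right_mem_Icc.2 ht.le) ht.le
      rwa [hg0] at this
  have : log (1 - q + q * exp t) ≤ q * t + t ^ 2 / 8 := by
    have := hgt
    simp only [hg] at this
    linarith
  calc 1 - q + q * exp t = exp (log (1 - q + q * exp t)) :=
        (exp_log (bern_D_pos hq0 hq1 t)).symm
    _ ≤ exp (q * t + t ^ 2 / 8) := exp_le_exp.2 this


variable {Ω : Type*} [MeasurableSpace Ω] {μ : Measure Ω} [IsProbabilityMeasure μ]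

lemma bern_exp_eq {Y : Ω → ℝ} (h01 : ∀ ω, Y ω = 0 ∨ Y ω = 1) (t : ℝ) :
    (fun ω => exp (t * Y ω)) = fun ω => 1 + (exp t - 1) * Y ω := by
  funext ω; rcases h01 ω with h | h <;> simp [h]

lemma bern_indicator {Y : Ω → ℝ} (h01 : ∀ ω, Y ω = 0 ∨ Y ω = 1) :
    Y = Set.indicator {ω | Y ω = 1} (fun _ => (1:ℝ)) := by
  funext ω; rcases h01 ω with h | h <;> simp [Set.indicator_apply, h]

lemma bern_integrable {Y : Ω → ℝ} (hY : Measurable Y) (h01 : ∀ ω, Y ω = 0 ∨ Y ω = 1) :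
    Integrable Y μ := by
  rw [bern_indicator h01]
  exact (integrable_const (1:ℝ)).indicator (hY (measurableSet_singleton 1))

lemma bern_integral {Y : Ω → ℝ} (hY : Measurable Y) (h01 : ∀ ω, Y ω = 0 ∨ Y ω = 1) :
    ∫ ω, Y ω ∂μ = (μ {ω | Y ω = 1}).toReal := by
  have hset : MeasurableSet {ω | Y ω = 1} := hY (measurableSet_singleton 1)
  conv_lhs => rw [bern_indicator h01]
  rw [integral_indicator_const (1:ℝ) hset]
  simp
  rfl

lemma bern_int_exp {Y : Ω → ℝ} (hY : Measurable Y) (h01 : ∀ ω, Y ω = 0 ∨ Y ω = 1) (t : ℝ) :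
    Integrable (fun ω => exp (t * Y ω)) μ := by
  rw [bern_exp_eq h01]
  exact (integrable_const 1).add ((bern_integrable hY h01).const_mul _)

lemma bern_mgf {Y : Ω → ℝ} (hY : Measurable Y) (h01 : ∀ ω, Y ω = 0 ∨ Y ω = 1) (t : ℝ) :
    mgf Y μ t = 1 - (μ {ω | Y ω = 1}).toReal + (μ {ω | Y ω = 1}).toReal * exp t := by
  rw [mgf, bern_exp_eq h01]
  rw [integral_add (integrable_const 1) ((bern_integrable hY h01).const_mul _)]
  rw [integral_const, integral_const_mul, bern_integral hY h01]
  simp; ring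

lemma bern_tail {Y : ℕ → Ω → ℝ} (hmeas : ∀ i, Measurable (Y i))
    (h01 : ∀ i ω, Y i ω = 0 ∨ Y i ω = 1) {q : ℝ} (hq0 : 0 ≤ q) (hq1 : q ≤ 1)
    (hdist : ∀ i, (μ {ω | Y i ω = 1}).toReal = q)
    (hindep : iIndepFun Y μ)
    (R : ℕ) (hR0 : 0 < R) {ε : ℝ} (hε : 0 < ε) :
    (μ {ω | ε < |(∑ i ∈ Finset.range R, Y i ω) / R - q|}).toReal ≤
      2 * exp (-2 * R * ε ^ 2) := by
  have hRpos : (0:ℝ) < R := Nat.cast_pos.2 hR0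
  set S : Ω → ℝ := ∑ i ∈ Finset.range R, Y i with hS
  have hSapp : ∀ ω, S ω = ∑ i ∈ Finset.range R, Y i ω := fun ω => by
    simp [hS, Finset.sum_apply]
  have hmgf : ∀ t : ℝ, mgf S μ t ≤ exp (R * (q * t + t ^ 2 / 8)) := by
    intro t
    rw [hS, ProbabilityTheory.iIndepFun.mgf_sum hindep hmeas]
    have heach : ∀ i ∈ Finset.range R, mgf (Y i) μ t = 1 - q + q * exp t := fun i _ => by
      rw [bern_mgf (hmeas i) (h01 i), hdist i]
    rw [Finset.prod_congr rfl heach, Finset.prod_const, Finset.card_range]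
    calc (1 - q + q * exp t) ^ R ≤ (exp (q * t + t ^ 2 / 8)) ^ R :=
          pow_le_pow_left₀ (bern_D_pos hq0 hq1 t).le (bern_mgf_le hq0 hq1 t) R
      _ = exp (R * (q * t + t ^ 2 / 8)) := by rw [← exp_nat_mul]
  have hint : ∀ t : ℝ, Integrable (fun ω => exp (t * S ω)) μ := fun t =>
    ProbabilityTheory.iIndepFun.integrable_exp_mul_sum hindep hmeas
      (fun i _ => bern_int_exp (hmeas i) (h01 i) t)
  have hA := ProbabilityTheory.measure_ge_le_exp_mul_mgf (μ := μ) (X := S)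
      (R * (q + ε)) (t := 4 * ε) (by positivity) (hint _)
  have hB := ProbabilityTheory.measure_le_le_exp_mul_mgf (μ := μ) (X := S)
      (R * (q - ε)) (t := -(4 * ε)) (by linarith) (hint _)
  have hA' : (μ {ω | R * (q + ε) ≤ S ω}).toReal ≤ exp (-2 * R * ε ^ 2) := by
    refine hA.trans ?_
    calc exp (-(4 * ε) * (R * (q + ε))) * mgf S μ (4 * ε)
        ≤ exp (-(4 * ε) * (R * (q + ε))) * exp (R * (q * (4 * ε) + (4 * ε) ^ 2 / 8)) := by
          exact mul_le_mul_of_nonneg_left (hmgf _) (exp_pos _).le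
      _ = exp (-2 * R * ε ^ 2) := by rw [← exp_add]; congr 1; ring
  have hB' : (μ {ω | S ω ≤ R * (q - ε)}).toReal ≤ exp (-2 * R * ε ^ 2) := by
    refine hB.trans ?_
    calc exp (-(-(4 * ε)) * (R * (q - ε))) * mgf S μ (-(4 * ε))
        ≤ exp (-(-(4 * ε)) * (R * (q - ε))) * exp (R * (q * (-(4 * ε)) + (-(4 * ε)) ^ 2 / 8)) := by
          exact mul_le_mul_of_nonneg_left (hmgf _) (exp_pos _).le
      _ = exp (-2 * R * ε ^ 2) := by rw [← exp_add]; congr 1; ring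
  have hsub : {ω | ε < |(∑ i ∈ Finset.range R, Y i ω) / R - q|} ⊆
      {ω | R * (q + ε) ≤ S ω} ∪ {ω | S ω ≤ R * (q - ε)} := by
    intro ω hω
    simp only [Set.mem_setOf_eq] at hω
    rw [← hSapp ω] at hω
    rcases lt_abs.1 hω with h | h
    · left
      have : q + ε < S ω / R := by linarith
      have := (lt_div_iff₀ hRpos).1 this
      simp only [Set.mem_setOf_eq]; linarith
    · right
      have : S ω / R < q - ε := by linarith
      have := (div_lt_iff₀ hRpos).1 this
      simp only [Set.mem_setOf_eq]; linarith
  have hmeasle : (μ {ω | ε < |(∑ i ∈ Finset.range R, Y i ω) / R - q|}).toReal ≤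
      (μ {ω | R * (q + ε) ≤ S ω}).toReal + (μ {ω | S ω ≤ R * (q - ε)}).toReal := by
    rw [← ENNReal.toReal_add (measure_ne_top μ _) (measure_ne_top μ _)]
    exact ENNReal.toReal_mono
      (by exact ENNReal.add_ne_top.2 ⟨measure_ne_top μ _, measure_ne_top μ _⟩)
      ((measure_mono hsub).trans (measure_union_le _ _))
  linarith

end Aux

/-- Monte Carlo estimation error bound for the surrogate function:
with `n = |V| ≥ 2` nodes and `R ≥ n² ln(2n^{δ+1}) / (2γ²)` simulations, where for each
node `u` the indicators `X u 1, …, X u R` are i.i.d. `{0,1}`-valued with mean `p u`,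
the estimate `f̂ = Σ_u min(P̂ u, τ u)` of `f = Σ_u min(p u, τ u)` satisfies
`P(|f̂ − f| ≤ γ) ≥ 1 − n^{−δ}`. -/
theorem surrogate_estimate {Ω : Type*} [MeasurableSpace Ω]
    (μ : Measure Ω) [IsProbabilityMeasure μ]
    {V : Type*} [Fintype V] (hn : 2 ≤ Fintype.card V)
    (p : V → ℝ) (hp0 : ∀ u, 0 ≤ p u) (hp1 : ∀ u, p u ≤ 1) (τ : V → ℝ)
    (γ δ : ℝ) (hγ : 0 < γ) (hδ : 0 < δ)
    (R : ℕ) (hR0 : 0 < R)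
    (hR : (R : ℝ) ≥ (Fintype.card V : ℝ) ^ 2 *
      Real.log (2 * (Fintype.card V : ℝ) ^ (δ + 1)) / (2 * γ ^ 2))
    (X : V → ℕ → Ω → ℝ) (hmeas : ∀ u i, Measurable (X u i))
    (h01 : ∀ u i ω, X u i ω = 0 ∨ X u i ω = 1)
    (hdist : ∀ u i, (μ {ω | X u i ω = 1}).toReal = p u)
    (hindep : ∀ u : V, ProbabilityTheory.iIndepFun (X u) μ) :
    (μ {ω | |(∑ u : V, min ((∑ i ∈ Finset.range R, X u i ω) / (R : ℝ)) (τ u)) -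
        ∑ u : V, min (p u) (τ u)| ≤ γ}).toReal ≥
      1 - (Fintype.card V : ℝ) ^ (-δ) := by
  classical
  set n : ℕ := Fintype.card V with hn_def
  have hn2 : (2:ℝ) ≤ (n:ℝ) := by exact_mod_cast hn
  have hnpos : (0:ℝ) < (n:ℝ) := by linarith
  have hnne : (n:ℝ) ≠ 0 := hnpos.ne'
  set ε : ℝ := γ / n with hε_def
  have hε : 0 < ε := div_pos hγ hnpos
  -- per-node tail bound
  have htail : ∀ u : V,
      (μ {ω | ε < |(∑ i ∈ Finset.range R, X u i ω) / (R:ℝ) - p u|}).toReal ≤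
        2 * exp (-2 * (R:ℝ) * ε ^ 2) := fun u =>
    bern_tail (hmeas u) (h01 u) (hp0 u) (hp1 u) (hdist u) (hindep u) R hR0 hε
  -- numeric bound: 2 exp(-2Rε²) ≤ n^(-(δ+1))
  have hnum : 2 * exp (-2 * (R:ℝ) * ε ^ 2) ≤ (n:ℝ) ^ (-(δ + 1)) := by
    set L : ℝ := Real.log (2 * (n:ℝ) ^ (δ + 1)) with hL_def
    have hx : (0:ℝ) < 2 * (n:ℝ) ^ (δ + 1) := by positivity
    have h1 : (n:ℝ) ^ 2 * L ≤ (R:ℝ) * (2 * γ ^ 2) :=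
      (div_le_iff₀ (by positivity)).1 hR
    have h2 : L ≤ 2 * (R:ℝ) * ε ^ 2 := by
      have heq : 2 * (R:ℝ) * ε ^ 2 = 2 * (R:ℝ) * γ ^ 2 / (n:ℝ) ^ 2 := by
        rw [hε_def, div_pow]; ring
      rw [heq, le_div_iff₀ (by positivity)]
      nlinarith
    have h3 : exp (-2 * (R:ℝ) * ε ^ 2) ≤ exp (-L) := by
      apply exp_le_exp.2; linarith
    have h4 : exp (-L) = (2 * (n:ℝ) ^ (δ + 1))⁻¹ := by
      rw [Real.exp_neg, Real.exp_log hx]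
    have h5 : 2 * (2 * (n:ℝ) ^ (δ + 1))⁻¹ = (n:ℝ) ^ (-(δ + 1)) := by
      rw [Real.rpow_neg hnpos.le]
      rw [mul_inv]
      ring_nf
    calc 2 * exp (-2 * (R:ℝ) * ε ^ 2) ≤ 2 * exp (-L) := by linarith [h3]
      _ = (n:ℝ) ^ (-(δ + 1)) := by rw [h4, h5]
  -- measurability of the good event
  have hmf : Measurable fun ω =>
      ∑ u : V, min ((∑ i ∈ Finset.range R, X u i ω) / (R:ℝ)) (τ u) :=
    Finset.measurable_sum _ fun u _ =>
      ((Finset.measurable_sum _ fun i _ => hmeas u i).div_const _).min measurable_const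
  set G : Set Ω := {ω | |(∑ u : V, min ((∑ i ∈ Finset.range R, X u i ω) / (R:ℝ)) (τ u)) -
      ∑ u : V, min (p u) (τ u)| ≤ γ} with hG_def
  have hG : MeasurableSet G :=
    measurableSet_le ((hmf.sub measurable_const).abs) measurable_const
  -- complement is covered by bad events
  have hGc : Gᶜ ⊆ ⋃ u : V,
      {ω | ε < |(∑ i ∈ Finset.range R, X u i ω) / (R:ℝ) - p u|} := by
    intro ω hω
    by_contra hcon
    simp only [Set.mem_iUnion, Set.mem_setOf_eq, not_exists, not_lt] at hcon
    apply hω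
    simp only [hG_def, Set.mem_setOf_eq]
    calc |(∑ u : V, min ((∑ i ∈ Finset.range R, X u i ω) / (R:ℝ)) (τ u)) -
          ∑ u : V, min (p u) (τ u)|
        = |∑ u : V, (min ((∑ i ∈ Finset.range R, X u i ω) / (R:ℝ)) (τ u) -
            min (p u) (τ u))| := by rw [Finset.sum_sub_distrib]
      _ ≤ ∑ u : V, |min ((∑ i ∈ Finset.range R, X u i ω) / (R:ℝ)) (τ u) -
            min (p u) (τ u)| := Finset.abs_sum_le_sum_abs _ _
      _ ≤ ∑ _u : V, ε := by
          apply Finset.sum_le_sum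
          intro u _
          refine le_trans ?_ (hcon u)
          refine (abs_min_sub_min_le_max _ _ _ _).trans ?_
          simp
      _ = γ := by
          rw [Finset.sum_const, Finset.card_univ, nsmul_eq_mul, ← hn_def, hε_def,
            mul_div_cancel₀ _ hnne]
  -- union bound
  have hGcle : (μ Gᶜ).toReal ≤ (n:ℝ) ^ (-δ) := by
    have hle : μ Gᶜ ≤ ∑ u : V, μ {ω | ε < |(∑ i ∈ Finset.range R, X u i ω) / (R:ℝ) - p u|} :=
      (measure_mono hGc).trans (measure_iUnion_fintype_le μ _)
    have hfin : (∑ u : V, μ {ω | ε < |(∑ i ∈ Finset.range R, X u i ω) / (R:ℝ) - p u|}) ≠ ⊤ :=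
      (ENNReal.sum_lt_top.2 fun _ _ => measure_lt_top μ _).ne
    have h6 : (μ Gᶜ).toReal ≤
        ∑ u : V, (μ {ω | ε < |(∑ i ∈ Finset.range R, X u i ω) / (R:ℝ) - p u|}).toReal := by
      rw [← ENNReal.toReal_sum (fun _ _ => measure_ne_top μ _)]
      exact ENNReal.toReal_mono hfin hle
    refine h6.trans ?_
    calc (∑ u : V, (μ {ω | ε < |(∑ i ∈ Finset.range R, X u i ω) / (R:ℝ) - p u|}).toReal)
        ≤ ∑ _u : V, (n:ℝ) ^ (-(δ + 1)) :=
          Finset.sum_le_sum fun u _ => (htail u).trans hnum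
      _ = (n:ℝ) * (n:ℝ) ^ (-(δ + 1)) := by
          rw [Finset.sum_const, Finset.card_univ, nsmul_eq_mul, ← hn_def]
      _ = (n:ℝ) ^ (-δ) := by
          nth_rewrite 1 [← Real.rpow_one (n:ℝ)]
          rw [← Real.rpow_add hnpos]
          norm_num
  have hsplit : (μ G).toReal + (μ Gᶜ).toReal = 1 := by
    rw [← ENNReal.toReal_add (measure_ne_top μ _) (measure_ne_top μ _),
      measure_add_measure_compl hG]
    simp
  have := hGcle
  linarith
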